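/- Let G be a map with simple dual G*, K ⊆ E(G) a dual-separating edge set with K* induced by a face set X_f, and suppose vertices v, v' of G are not endpoints of any edge of K, v lies on a face of X_f and v' lies on a face of X_f^c. Then every path in G from v to v' contains a vertex incident with an edge of K; consequently the endpoints of K form a cut-set of G. -/

import Mathlib

/-- A combinatorial map (connected graph cellularly embedded in an orientable surface),
given by a set of darts `D`, the edge involution `σ` and the rotation `ρ`. -/
structure CombMap where
  D : Type
  fin : Finite D
  σ : Equiv.Perm D
  ρ : Equiv.Perm D
  σ_invol : ∀ d, σ (σ d) = d
  σ_fixfree : ∀ d, σ d ≠ d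
  conn : ∀ d d' : D, ∃ g ∈ Subgroup.closure ({σ, ρ} : Set (Equiv.Perm D)), g d = d'

attribute [instance] CombMap.fin

namespace CombMap

variable (M : CombMap)

/-- The face permutation. -/
def φ : Equiv.Perm M.D := M.ρ * M.σ

def vSetoid : Setoid M.D :=
  ⟨M.ρ.SameCycle, ⟨fun _ => Equiv.Perm.SameCycle.refl _ _,
    Equiv.Perm.SameCycle.symm, Equiv.Perm.SameCycle.trans⟩⟩

def eSetoid : Setoid M.D :=
  ⟨M.σ.SameCycle, ⟨fun _ => Equiv.Perm.SameCycle.refl _ _,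
    Equiv.Perm.SameCycle.symm, Equiv.Perm.SameCycle.trans⟩⟩

def fSetoid : Setoid M.D :=
  ⟨M.φ.SameCycle, ⟨fun _ => Equiv.Perm.SameCycle.refl _ _,
    Equiv.Perm.SameCycle.symm, Equiv.Perm.SameCycle.trans⟩⟩

/-- Vertices are orbits of `ρ`. -/
def Vertex := Quotient M.vSetoid
/-- Edges are orbits of `σ`. -/
def Edge := Quotient M.eSetoid
/-- Faces are orbits of `φ`. -/
def Face := Quotient M.fSetoid

instance : Finite M.Vertex := Quotient.finite _
instance : Finite M.Edge := Quotient.finite _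
instance : Finite M.Face := Quotient.finite _

def vtx (d : M.D) : M.Vertex := Quotient.mk M.vSetoid d
def edg (d : M.D) : M.Edge := Quotient.mk M.eSetoid d
def fce (d : M.D) : M.Face := Quotient.mk M.fSetoid d

noncomputable def nV : ℕ := Nat.card M.Vertex
noncomputable def nE : ℕ := Nat.card M.Edge
noncomputable def nF : ℕ := Nat.card M.Face

/-- The size of a face: the length of its facial walk, i.e. the number of darts in it. -/
noncomputable def faceSize (f : M.Face) : ℕ := Nat.card {d : M.D // M.fce d = f}

/-- The degree of a vertex: the number of darts emanating from it. -/
noncomputable def degree (v : M.Vertex) : ℕ := Nat.card {d : M.D // M.vtx d = v}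

/-- The face excess `Σ_f (d(f) - 3)`. -/
noncomputable def faceExcess : ℤ := ∑ᶠ f : M.Face, ((M.faceSize f : ℤ) - 3)

/-- The underlying graph of the map is simple: no loops, no multiple edges. -/
def Simple : Prop :=
  (∀ d, M.vtx d ≠ M.vtx (M.σ d)) ∧
  ∀ d d', M.vtx d = M.vtx d' → M.vtx (M.σ d) = M.vtx (M.σ d') → M.edg d = M.edg d'

/-- The dual has no loops. -/
def DualLoopFree : Prop := ∀ d, M.fce d ≠ M.fce (M.σ d)

/-- The dual is simple: no loops and no multiple edges. -/
def DualSimple : Prop :=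
  M.DualLoopFree ∧
  ∀ d d', M.fce d = M.fce d' → M.fce (M.σ d) = M.fce (M.σ d') → M.edg d = M.edg d'

/-- The underlying simple graph on the vertices of the map. -/
def graph : SimpleGraph M.Vertex :=
  SimpleGraph.fromRel (fun a b => ∃ d, M.vtx d = a ∧ M.vtx (M.σ d) = b)

/-- The underlying simple graph of the dual map, on the faces of the map. -/
def dualGraph : SimpleGraph M.Face :=
  SimpleGraph.fromRel (fun a b => ∃ d, M.fce d = a ∧ M.fce (M.σ d) = b)

/-- Vertex `v` lies on the face `f`. -/
def VertexOnFace (v : M.Vertex) (f : M.Face) : Prop := ∃ d, M.fce d = f ∧ M.vtx d = v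

/-- Faces `f` and `f'` share an edge. -/
def FaceAdj (f f' : M.Face) : Prop := ∃ d, M.fce d = f ∧ M.fce (M.σ d) = f'


lemma vtx_rho (d : M.D) : M.vtx (M.ρ d) = M.vtx d :=
  (Quotient.sound (⟨1, by simp⟩ : M.ρ.SameCycle d (M.ρ d))).symm

lemma vtx_zpow (i : ℤ) (d : M.D) : M.vtx ((M.ρ ^ i) d) = M.vtx d :=
  (Quotient.sound (⟨i, rfl⟩ : M.ρ.SameCycle d ((M.ρ ^ i) d))).symm

lemma fce_sigma_eq_fce_rho (d : M.D) : M.fce (M.σ d) = M.fce (M.ρ d) :=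
  Quotient.sound (⟨1, by simp [CombMap.φ, M.σ_invol]⟩ : M.φ.SameCycle (M.σ d) (M.ρ d))

end CombMap

section Aux
variable (M : CombMap) (Xf : Set M.Face) (K : Set M.Edge)
  (hK : ∀ d, M.edg d ∈ K ↔ (M.fce d ∈ Xf ↔ M.fce (M.σ d) ∉ Xf))
  (VK : Set M.Vertex) (hVK : VK = {v | ∃ d, M.edg d ∈ K ∧ M.vtx d = v})

include hK hVK in
/-- If the vertex of `d` is not an endpoint of `K`, the edge of `d` is not in `K`,
hence the faces on both sides of `d` are on the same side of `Xf`. -/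
lemma step (d : M.D) (hd : M.vtx d ∉ VK) :
    (M.fce d ∈ Xf ↔ M.fce (M.σ d) ∈ Xf) := by
  have hne : M.edg d ∉ K := fun h => hd (hVK ▸ ⟨d, h, rfl⟩)
  rw [hK d] at hne
  tauto

include hK hVK in
lemma rho_step (d : M.D) (hd : M.vtx d ∉ VK) :
    (M.fce d ∈ Xf ↔ M.fce (M.ρ d) ∈ Xf) := by
  rw [← M.fce_sigma_eq_fce_rho]
  exact step M Xf K hK VK hVK d hd

include hK hVK in
/-- All darts at a vertex not touching `K` have faces on the same side of `Xf`. -/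
lemma uniform (d d' : M.D) (hdd' : M.vtx d = M.vtx d') (hd : M.vtx d ∉ VK) :
    (M.fce d ∈ Xf ↔ M.fce d' ∈ Xf) := by
  obtain ⟨i, hi⟩ : M.ρ.SameCycle d d' := Quotient.exact hdd'
  subst hi
  clear hdd'
  induction i using Int.induction_on with
  | zero => simp
  | succ n ih =>
    have hv : M.vtx ((M.ρ ^ (n : ℤ)) d) = M.vtx d := M.vtx_zpow _ d
    have hs := rho_step M Xf K hK VK hVK ((M.ρ ^ (n : ℤ)) d) (hv ▸ hd)
    have harr : (M.ρ ^ (1 + (n : ℤ))) d = M.ρ ((M.ρ ^ (n : ℤ)) d) := by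
      rw [zpow_add, zpow_one]; rfl
    rw [show (1 + (n : ℤ)) = n + 1 by ring] at harr
    rw [harr]
    tauto
  | pred n ih =>
    have hv : M.vtx ((M.ρ ^ (-(n : ℤ) - 1)) d) = M.vtx d := M.vtx_zpow _ d
    have hs := rho_step M Xf K hK VK hVK ((M.ρ ^ (-(n : ℤ) - 1)) d) (hv ▸ hd)
    have harr : (M.ρ ^ (1 + (-(n : ℤ) - 1))) d = M.ρ ((M.ρ ^ (-(n : ℤ) - 1)) d) := by
      rw [zpow_add, zpow_one]; rfl
    rw [show (1 + (-(n : ℤ) - 1)) = -(n : ℤ) by ring] at harr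
    rw [← harr] at hs
    tauto

include hK hVK in
/-- Along a walk avoiding `VK`, the side `Xf` is preserved. -/
lemma walk_side {a b : M.Vertex} (p : M.graph.Walk a b)
    (hp : ∀ w ∈ p.support, w ∉ VK)
    (ha : ∃ d, M.vtx d = a ∧ M.fce d ∈ Xf) : ∃ d, M.vtx d = b ∧ M.fce d ∈ Xf := by
  induction p with
  | nil => exact ha
  | @cons a c b hadj q ih =>
    apply ih (fun w hw => hp w (by simp [hw]))
    have haK : a ∉ VK := hp a (by simp)
    obtain ⟨d, hda, hdX⟩ := ha
    obtain ⟨-, (⟨e, he1, he2⟩ | ⟨e, he1, he2⟩)⟩ := hadj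
    · refine ⟨M.σ e, he2, ?_⟩
      have h1 : M.fce e ∈ Xf :=
        (uniform M Xf K hK VK hVK d e (by rw [hda, he1]) (hda ▸ haK)).mp hdX
      exact (step M Xf K hK VK hVK e (he1 ▸ haK)).mp h1
    · refine ⟨e, he1, ?_⟩
      have h1 : M.fce (M.σ e) ∈ Xf :=
        (uniform M Xf K hK VK hVK d (M.σ e) (by rw [hda, he2]) (hda ▸ haK)).mp hdX
      have h2 := step M Xf K hK VK hVK (M.σ e) (he2 ▸ haK)
      rw [M.σ_invol] at h2
      exact h2.mp h1

end Aux


/-- `k`-connectivity of a graph: more than `k` vertices, and removing fewer than `k`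
vertices never disconnects it. -/
def KConn {α : Type} (H : SimpleGraph α) (k : ℕ) : Prop :=
  k < Nat.card α ∧ ∀ S : Set α, S.ncard < k → (H.induce Sᶜ).Connected

/-- Let `K` be a dual-separating edge set of a map with simple dual, with `K*` the
edge cut of the dual induced by the face set `X_f`.  If `v` and `v'` are not
endpoints of edges of `K`, `v` lies on a face of `X_f` and `v'` on a face of the
complement, then every path from `v` to `v'` contains a vertex incident with an
edge of `K`; consequently the endpoints of the edges of `K` form a cut-set. -/
theorem dual_separating_cutset
    (M : CombMap) (hdual : M.DualSimple)
    (Xf : Set M.Face) (K : Set M.Edge)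
    (hK : ∀ d, M.edg d ∈ K ↔ (M.fce d ∈ Xf ↔ M.fce (M.σ d) ∉ Xf))
    (VK : Set M.Vertex) (hVK : VK = {v | ∃ d, M.edg d ∈ K ∧ M.vtx d = v})
    (v v' : M.Vertex)
    (hv : v ∉ VK) (hv' : v' ∉ VK)
    (hvX : ∃ d, M.vtx d = v ∧ M.fce d ∈ Xf)
    (hv'X : ∃ d, M.vtx d = v' ∧ M.fce d ∉ Xf) :
    (∀ p : M.graph.Walk v v', ∃ w ∈ p.support, w ∈ VK) ∧
    ¬ (M.graph.induce VKᶜ).Reachable ⟨v, hv⟩ ⟨v', hv'⟩ := by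
  have part1 : ∀ p : M.graph.Walk v v', ∃ w ∈ p.support, w ∈ VK := by
    intro p
    by_contra hcon
    push_neg at hcon
    obtain ⟨d, hd1, hd2⟩ := walk_side M Xf K hK VK hVK p hcon hvX
    obtain ⟨d', hd'1, hd'2⟩ := hv'X
    exact hd'2 ((uniform M Xf K hK VK hVK d d' (by rw [hd1, hd'1]) (hd1 ▸ hv')).mp hd2)
  refine ⟨part1, ?_⟩
  rintro ⟨q⟩
  let f : (M.graph.induce VKᶜ) →g M.graph :=
    ⟨Subtype.val, fun h => h⟩
  obtain ⟨w, hw1, hw2⟩ := part1 (q.map f)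
  rw [SimpleGraph.Walk.support_map] at hw1
  obtain ⟨u, hu, rfl⟩ := List.mem_map.mp hw1
  exact u.2 hw2
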